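/- arXiv:cond-mat/0502205 — 5 statements merged into one kernel-verified Lean document; each statement's English description precedes it below -/
import Mathlib

section
/- Let M(y,z) be the n×n matrix with entries M_{1,1} = z_1 - y_1, M_{j,j} = -y_j for 2 ≤ j ≤ n, M_{j+1,j} = y_j for 1 ≤ j ≤ n-1, M_{1,j} = z_j for j ≥ 2, and 0 otherwise. Then its characteristic polynomial satisfies det(λI - M(y,z)) = (λ + y_1 - z_1)·∏_{i=2}^n (λ + y_i) - ∑_{j=2}^n [(∏_{i=1}^{j-1} y_i)·z_j·∏_{i=j+1}^n (λ + y_i)]. -/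
open Finset

namespace Stmt10Aux

noncomputable def Am (n : ℕ) [NeZero n] (y z : Fin n → ℝ) (lam : ℝ) : Matrix (Fin n) (Fin n) ℝ :=
  Matrix.of fun i j : Fin n =>
    if i = 0 ∧ j = 0 then lam + y 0 - z 0
    else if i = j then lam + y j
    else if (i : ℕ) = (j : ℕ) + 1 then -y j
    else if i = 0 then -z j
    else 0

noncomputable def RHS (n : ℕ) [NeZero n] (y z : Fin n → ℝ) (lam : ℝ) : ℝ :=
  (lam + y 0 - z 0) * ∏ i ∈ Finset.Ioi (0 : Fin n), (lam + y i)
    - ∑ j ∈ Finset.Ioi (0 : Fin n),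
        (∏ i ∈ Finset.Iio j, y i) * z j * ∏ i ∈ Finset.Ioi j, (lam + y i)

lemma Ioi_castSucc_eq {n : ℕ} (j : Fin n) :
    Finset.Ioi (Fin.castSucc j) = insert (Fin.last n) ((Finset.Ioi j).map Fin.castSuccEmb) := by
  ext i
  simp only [mem_Ioi, mem_insert, mem_map, Fin.castSuccEmb, Function.Embedding.coeFn_mk]
  constructor
  · intro h
    rcases eq_or_ne i (Fin.last n) with hi | hi
    · exact Or.inl hi
    · refine Or.inr ⟨i.castPred hi, ?_, Fin.castSucc_castPred i hi⟩
      rw [← Fin.castSucc_lt_castSucc_iff, Fin.castSucc_castPred i hi]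
      exact h
  · rintro (rfl | ⟨k, hk, rfl⟩)
    · exact Fin.castSucc_lt_last j
    · exact Fin.castSucc_lt_castSucc_iff.mpr hk

lemma prod_Ioi_castSucc {n : ℕ} (j : Fin n) (f : Fin (n + 1) → ℝ) :
    ∏ i ∈ Finset.Ioi (Fin.castSucc j), f i
      = (∏ i ∈ Finset.Ioi j, f (Fin.castSucc i)) * f (Fin.last n) := by
  rw [Ioi_castSucc_eq, Finset.prod_insert (by
      simp only [Finset.mem_map, not_exists, not_and]
      exact fun x _ h => (Fin.castSucc_lt_last x).ne h),
    Finset.prod_map, mul_comm]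
  rfl

lemma Ioi_last_empty (n : ℕ) : Finset.Ioi (Fin.last n) = ∅ := by
  ext i; simp [(Fin.le_last i).not_gt]

section Entries

variable {n : ℕ} (y z : Fin (n + 1) → ℝ) (lam : ℝ)

lemma Am_diag {i : Fin (n + 1)} (h : i ≠ 0) : Am (n + 1) y z lam i i = lam + y i := by
  simp only [Am, Matrix.of_apply]
  rw [if_neg (by tauto)]
  simp

lemma Am_sub {i j : Fin (n + 1)} (h : (i : ℕ) = (j : ℕ) + 1) : Am (n + 1) y z lam i j = -y j := by
  have hi0 : i ≠ 0 := by
    intro e; rw [e] at h; simp at h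
  have hij : i ≠ j := by
    intro e; rw [e] at h; omega
  simp only [Am, Matrix.of_apply]
  rw [if_neg (by tauto), if_neg hij, if_pos h]

lemma Am_row0 {j : Fin (n + 1)} (h : j ≠ 0) : Am (n + 1) y z lam 0 j = -z j := by
  simp only [Am, Matrix.of_apply]
  rw [if_neg (by tauto), if_neg (fun e => h e.symm), if_neg (by simp)]
  simp

lemma Am_zero {i j : Fin (n + 1)} (h : i ≠ 0) (h2 : i ≠ j) (h3 : (i : ℕ) ≠ (j : ℕ) + 1) :
    Am (n + 1) y z lam i j = 0 := by
  simp only [Am, Matrix.of_apply]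
  rw [if_neg (by tauto), if_neg h2, if_neg h3, if_neg h]

end Entries

lemma RHS_rec (m : ℕ) (y z : Fin (m + 1 + 1) → ℝ) (lam : ℝ) :
    RHS (m + 1 + 1) y z lam
      = (lam + y (Fin.last (m + 1))) * RHS (m + 1) (y ∘ Fin.castSucc) (z ∘ Fin.castSucc) lam
        - z (Fin.last (m + 1)) * ∏ i : Fin (m + 1), y (Fin.castSucc i) := by
  have hT : ∀ j' : Fin (m + 1),
      (∏ i ∈ Finset.Iio (Fin.castSucc j'), y i) * z (Fin.castSucc j')
          * ∏ i ∈ Finset.Ioi (Fin.castSucc j'), (lam + y i)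
        = ((∏ i ∈ Finset.Iio j', y (Fin.castSucc i)) * z (Fin.castSucc j')
            * ∏ i ∈ Finset.Ioi j', (lam + y (Fin.castSucc i))) * (lam + y (Fin.last (m + 1))) := by
    intro j'
    rw [Fin.Iio_castSucc, Finset.prod_map, prod_Ioi_castSucc]
    simp only [Fin.coe_castSuccEmb]
    ring
  simp only [RHS, Fin.prod_Ioi_zero, Fin.sum_Ioi_zero, Fin.prod_univ_castSucc,
    Fin.sum_univ_castSucc, Fin.succ_castSucc, Fin.succ_last, hT, Ioi_last_empty,
    Finset.prod_empty, mul_one, Fin.Iio_last_eq_map, Finset.prod_map, Fin.coe_castSuccEmb,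
    Function.comp_apply, Fin.castSucc_zero, ← Finset.sum_mul]
  ring

lemma key : ∀ (n : ℕ) (y z : Fin (n + 1) → ℝ) (lam : ℝ),
    (Am (n + 1) y z lam).det = RHS (n + 1) y z lam := by
  intro n
  induction n with
  | zero =>
      intro y z lam
      rw [Matrix.det_fin_one]
      simp [Am, RHS, Ioi_last_empty 0, show (Fin.last 0) = 0 from rfl]
  | succ m ih =>
      intro y z lam
      have hlast0 : (Fin.last (m + 1) : Fin (m + 1 + 1)) ≠ 0 := by
        simp [Fin.ext_iff]
      have hminor : (Am (m + 1 + 1) y z lam).submatrix Fin.castSucc Fin.castSucc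
          = Am (m + 1) (y ∘ Fin.castSucc) (z ∘ Fin.castSucc) lam := by
        ext i j
        simp only [Matrix.submatrix_apply, Am, Matrix.of_apply, Function.comp_apply,
          Fin.ext_iff, Fin.coe_castSucc, Fin.val_zero, Fin.castSucc_zero]
      have htri : ((Am (m + 1 + 1) y z lam).submatrix Fin.succ Fin.castSucc).det
          = ∏ i : Fin (m + 1), -(y (Fin.castSucc i)) := by
        rw [Matrix.det_of_upperTriangular (by
          intro i j hij
          have hij' : (j : ℕ) < (i : ℕ) := hij
          simp only [Matrix.submatrix_apply]
          apply Am_zero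
          · simp only [ne_eq, Fin.ext_iff, Fin.val_succ, Fin.val_zero]
            omega
          · simp only [ne_eq, Fin.ext_iff, Fin.val_succ, Fin.coe_castSucc]
            omega
          · simp only [ne_eq, Fin.val_succ, Fin.coe_castSucc]
            omega)]
        refine Finset.prod_congr rfl fun i _ => ?_
        simp only [Matrix.submatrix_apply]
        exact Am_sub y z lam (by simp)
      have hzterm : ∀ i : Fin m,
          Am (m + 1 + 1) y z lam ((i.succ).castSucc) (Fin.last (m + 1)) = 0 := by
        intro i
        have hi := i.isLt
        apply Am_zero
        · simp only [ne_eq, Fin.ext_iff, Fin.coe_castSucc, Fin.val_succ, Fin.val_zero]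
          omega
        · simp only [ne_eq, Fin.ext_iff, Fin.coe_castSucc, Fin.val_succ, Fin.val_last]
          omega
        · simp only [ne_eq, Fin.coe_castSucc, Fin.val_succ, Fin.val_last]
          omega
      rw [Matrix.det_succ_column (Am ((m + 1) + 1) y z lam) (Fin.last (m + 1))]
      rw [Fin.sum_univ_castSucc, Fin.sum_univ_succ]
      simp only [hzterm, mul_zero, zero_mul, Finset.sum_const_zero, add_zero]
      rw [Fin.castSucc_zero, Fin.succAbove_zero, Fin.succAbove_last]
      rw [hminor, htri, ih, Am_diag y z lam hlast0, Am_row0 y z lam hlast0]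
      simp only [Fin.val_zero, Fin.val_last, zero_add]
      rw [RHS_rec]
      have hPy : ∏ i : Fin (m + 1), -(y (Fin.castSucc i))
          = (-1 : ℝ) ^ (m + 1) * ∏ i : Fin (m + 1), y (Fin.castSucc i) := by
        calc ∏ i : Fin (m + 1), -(y (Fin.castSucc i))
            = ∏ i : Fin (m + 1), (-1 : ℝ) * y (Fin.castSucc i) :=
              Finset.prod_congr rfl fun i _ => by ring
          _ = (-1 : ℝ) ^ (m + 1) * ∏ i : Fin (m + 1), y (Fin.castSucc i) := by
              rw [Finset.prod_mul_distrib, Finset.prod_const, Finset.card_univ, Fintype.card_fin]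
      rw [hPy, pow_add ((-1 : ℝ)) (m + 1) (m + 1)]
      rcases mul_self_eq_one_iff.mp
          (show ((-1 : ℝ) ^ (m + 1)) * ((-1 : ℝ) ^ (m + 1)) = 1 from by
            rw [← pow_add]; exact Even.neg_one_pow ⟨m + 1, by ring⟩) with h | h <;>
        rw [h] <;> ring

end Stmt10Aux

/-- The characteristic polynomial of the matrix `M(y,z)` (with `M₁₁ = z₁ - y₁`,
`Mⱼⱼ = -yⱼ` for `j ≥ 2`, `M_{j+1,j} = yⱼ`, `M_{1,j} = zⱼ` for `j ≥ 2`, and `0` otherwise;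
indices are `0`-based in the formalization) satisfies
`det(λI - M) = (λ + y₁ - z₁)·∏_{i=2}^n (λ + yᵢ) - ∑_{j=2}^n (∏_{i<j} yᵢ)·zⱼ·∏_{i>j} (λ + yᵢ)`. -/
theorem stmt_10 (n : ℕ) [NeZero n] (y z : Fin n → ℝ) (lam : ℝ) :
    Matrix.det (lam • (1 : Matrix (Fin n) (Fin n) ℝ) -
        Matrix.of (fun i j : Fin n =>
          if i = 0 ∧ j = 0 then z 0 - y 0
          else if i = j then -y j
          else if (i : ℕ) = (j : ℕ) + 1 then y j
          else if i = 0 then z j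
          else 0))
      = (lam + y 0 - z 0) * ∏ i ∈ Finset.Ioi (0 : Fin n), (lam + y i)
        - ∑ j ∈ Finset.Ioi (0 : Fin n),
            (∏ i ∈ Finset.Iio j, y i) * z j * ∏ i ∈ Finset.Ioi j, (lam + y i) := by
  obtain ⟨m, rfl⟩ := Nat.exists_eq_succ_of_ne_zero (NeZero.ne n)
  have hmat : (lam • (1 : Matrix (Fin (m + 1)) (Fin (m + 1)) ℝ) -
      Matrix.of (fun i j : Fin (m + 1) =>
        if i = 0 ∧ j = 0 then z 0 - y 0
        else if i = j then -y j
        else if (i : ℕ) = (j : ℕ) + 1 then y j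
        else if i = 0 then z j
        else 0)) = Stmt10Aux.Am (m + 1) y z lam := by
    ext i j
    simp only [Matrix.sub_apply, Matrix.smul_apply, Matrix.one_apply, Matrix.of_apply,
      smul_eq_mul, Stmt10Aux.Am, Fin.ext_iff, Fin.val_zero]
    split_ifs
    all_goals try ring
    all_goals (exfalso; omega)
  rw [hmat, Stmt10Aux.key m y z lam]
  rfl
end

section
/- Suppose y_i > 0 for 1 ≤ i < n, z_i ≥ 0 for 1 ≤ i < n, y_n = 0, and z_n > 0. Then the polynomial P(λ) = (λ + y_1 - z_1)·∏_{i=2}^n (λ + y_i) - ∑_{j=2}^n (∏_{i=1}^{j-1} y_i)·z_j·∏_{i=j+1}^n (λ + y_i) has a strictly positive real root. -/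
open Finset

/-- The characteristic polynomial `P(λ, y, z)` of the matrix `M(y,z)`
(indices are `0`-based, so index `0` corresponds to the paper's index `1` and
`Fin.last` corresponds to the paper's index `n`). -/
noncomputable def charP (n : ℕ) [NeZero n] (lam : ℝ) (y z : Fin n → ℝ) : ℝ :=
  (lam + y 0 - z 0) * ∏ i ∈ Finset.Ioi (0 : Fin n), (lam + y i)
    - ∑ j ∈ Finset.Ioi (0 : Fin n),
        (∏ i ∈ Finset.Iio j, y i) * z j * ∏ i ∈ Finset.Ioi j, (lam + y i)

/-- If `yᵢ > 0` for `i < n`, `zᵢ ≥ 0` for `i < n`, `yₙ = 0` and `zₙ > 0`, then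
`P(λ) = (λ + y₁ - z₁)·∏_{i=2}^n (λ + yᵢ) - ∑_{j=2}^n (∏_{i<j} yᵢ)·zⱼ·∏_{i>j} (λ + yᵢ)` has a
strictly positive real root. -/
theorem stmt_11 (n : ℕ) [NeZero n] (y z : Fin n → ℝ)
    (hy : ∀ i : Fin n, i < (⊤ : Fin n) → 0 < y i)
    (hz : ∀ i : Fin n, i < (⊤ : Fin n) → 0 ≤ z i)
    (hyn : y ((⊤ : Fin n)) = 0) (hzn : 0 < z ((⊤ : Fin n))) :
    ∃ lam : ℝ, 0 < lam ∧ charP n lam y z = 0 := by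
  have hy0 : ∀ i : Fin n, 0 ≤ y i := by
    intro i
    rcases lt_or_eq_of_le (le_top : i ≤ ⊤) with h | h
    · exact (hy i h).le
    · rw [h, hyn]
  have hz0 : ∀ i : Fin n, 0 ≤ z i := by
    intro i
    rcases lt_or_eq_of_le (le_top : i ≤ ⊤) with h | h
    · exact hz i h
    · rw [h]; exact hzn.le
  -- the polynomial whose evaluation is `charP`
  set Q : Polynomial ℝ :=
    (Polynomial.X + Polynomial.C (y 0 - z 0)) *
        ∏ i ∈ Finset.Ioi (0 : Fin n), (Polynomial.X + Polynomial.C (y i))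
      - ∑ j ∈ Finset.Ioi (0 : Fin n),
          Polynomial.C ((∏ i ∈ Finset.Iio j, y i) * z j) *
            ∏ i ∈ Finset.Ioi j, (Polynomial.X + Polynomial.C (y i)) with hQ
  have heval : ∀ lam : ℝ, Q.eval lam = charP n lam y z := by
    intro lam
    simp only [hQ, charP, Polynomial.eval_sub, Polynomial.eval_mul, Polynomial.eval_add,
      Polynomial.eval_X, Polynomial.eval_C, Polynomial.eval_prod, Polynomial.eval_finset_sum]
    ring_nf
  -- the first part is monic of degree 1 + card (Ioi 0)
  have hmonic1 : ((Polynomial.X + Polynomial.C (y 0 - z 0)) *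
      ∏ i ∈ Finset.Ioi (0 : Fin n), (Polynomial.X + Polynomial.C (y i))).Monic :=
    (Polynomial.monic_X_add_C _).mul
      (Polynomial.monic_prod_of_monic _ _ fun i _ => Polynomial.monic_X_add_C _)
  have hdeg1 : ((Polynomial.X + Polynomial.C (y 0 - z 0)) *
      ∏ i ∈ Finset.Ioi (0 : Fin n), (Polynomial.X + Polynomial.C (y i))).natDegree
      = 1 + (Finset.Ioi (0 : Fin n)).card := by
    rw [Polynomial.natDegree_mul (Polynomial.monic_X_add_C _).ne_zero
      (Polynomial.monic_prod_of_monic _ _ fun i _ => Polynomial.monic_X_add_C _).ne_zero,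
      Polynomial.natDegree_X_add_C, Polynomial.natDegree_prod _ _
        (fun i _ => (Polynomial.monic_X_add_C _).ne_zero)]
    simp [Polynomial.natDegree_X_add_C]
  -- the sum has strictly smaller degree
  have hdegsum : (∑ j ∈ Finset.Ioi (0 : Fin n),
      Polynomial.C ((∏ i ∈ Finset.Iio j, y i) * z j) *
        ∏ i ∈ Finset.Ioi j, (Polynomial.X + Polynomial.C (y i))).degree
      < ((1 + (Finset.Ioi (0 : Fin n)).card : ℕ) : WithBot ℕ) := by
    refine lt_of_le_of_lt (Polynomial.degree_sum_le _ _) ?_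
    rw [Finset.sup_lt_iff (by exact_mod_cast WithBot.bot_lt_coe _)]
    intro j hj
    have hle : (∏ i ∈ Finset.Ioi j, (Polynomial.X + Polynomial.C (y i))).degree
        = ((Finset.Ioi j).card : WithBot ℕ) := by
      have hm : (∏ i ∈ Finset.Ioi j, (Polynomial.X + Polynomial.C (y i))).Monic :=
        Polynomial.monic_prod_of_monic _ _ fun i _ => Polynomial.monic_X_add_C _
      rw [Polynomial.degree_eq_natDegree hm.ne_zero, Polynomial.natDegree_prod _ _
        (fun i _ => (Polynomial.monic_X_add_C _).ne_zero)]
      simp [Polynomial.natDegree_X_add_C]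
    calc (Polynomial.C ((∏ i ∈ Finset.Iio j, y i) * z j) *
            ∏ i ∈ Finset.Ioi j, (Polynomial.X + Polynomial.C (y i))).degree
        ≤ (Polynomial.C ((∏ i ∈ Finset.Iio j, y i) * z j)).degree +
            (∏ i ∈ Finset.Ioi j, (Polynomial.X + Polynomial.C (y i))).degree :=
          Polynomial.degree_mul_le _ _
      _ ≤ 0 + ((Finset.Ioi j).card : WithBot ℕ) := by
          rw [hle]; exact add_le_add (Polynomial.degree_C_le) le_rfl
      _ < ((1 + (Finset.Ioi (0 : Fin n)).card : ℕ) : WithBot ℕ) := by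
          rw [zero_add]
          have hsub : Finset.Ioi j ⊆ Finset.Ioi (0 : Fin n) := by
            intro i hi
            simp only [Finset.mem_Ioi] at *
            exact lt_of_le_of_lt (Fin.zero_le (a := j)) hi
          have hcard : (Finset.Ioi j).card ≤ (Finset.Ioi (0 : Fin n)).card :=
            Finset.card_le_card hsub
          exact_mod_cast Nat.lt_of_le_of_lt hcard (by omega)
  have hQmonic : Q.Monic := by
    rw [hQ]
    exact hmonic1.sub_of_left (by rw [Polynomial.degree_eq_natDegree hmonic1.ne_zero, hdeg1]; exact hdegsum)
  have hQdeg : 0 < Q.degree := by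
    rw [hQ, Polynomial.degree_sub_eq_left_of_degree_lt
      (by rw [Polynomial.degree_eq_natDegree hmonic1.ne_zero, hdeg1]; exact hdegsum),
      Polynomial.degree_eq_natDegree hmonic1.ne_zero, hdeg1]
    exact_mod_cast Nat.lt_of_lt_of_le Nat.zero_lt_one (Nat.le_add_right 1 _)
  -- Q eval tends to +∞, so pick b > 0 with positive value
  have htop : Filter.Tendsto (fun x => Q.eval x) Filter.atTop Filter.atTop :=
    Polynomial.tendsto_atTop_of_leadingCoeff_nonneg Q hQdeg (by rw [hQmonic.leadingCoeff]; norm_num)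
  obtain ⟨b, hb⟩ := ((htop.eventually_gt_atTop 0).and (Filter.eventually_gt_atTop 0)).exists
  -- value at 0 is negative
  have hneg : charP n 0 y z < 0 := by
    rcases eq_or_lt_of_le (Fin.zero_le (a := (⊤ : Fin n))) with htopz | htopz
    · -- n = 1 : ⊤ = 0
      have hIoi : Finset.Ioi (0 : Fin n) = ∅ := by
        rw [htopz]
        exact Finset.eq_empty_of_forall_notMem fun x hx =>
          absurd (Finset.mem_Ioi.mp hx) (not_lt.mpr le_top)
      simp only [charP, hIoi, Finset.prod_empty, Finset.sum_empty, mul_one, sub_zero]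
      rw [← htopz] at hyn hzn
      rw [hyn]
      linarith
    · -- n ≥ 2 : ⊤ ∈ Ioi 0
      have hmem : (⊤ : Fin n) ∈ Finset.Ioi (0 : Fin n) := Finset.mem_Ioi.mpr htopz
      have hprod0 : (∏ i ∈ Finset.Ioi (0 : Fin n), ((0 : ℝ) + y i)) = 0 :=
        Finset.prod_eq_zero hmem (by rw [hyn]; ring)
      have hsumpos : 0 < ∑ j ∈ Finset.Ioi (0 : Fin n),
          (∏ i ∈ Finset.Iio j, y i) * z j * ∏ i ∈ Finset.Ioi j, ((0 : ℝ) + y i) := by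
        apply Finset.sum_pos' _ ⟨⊤, hmem, ?_⟩
        · intro j _
          apply mul_nonneg (mul_nonneg (Finset.prod_nonneg fun i _ => hy0 i) (hz0 j))
          exact Finset.prod_nonneg fun i _ => by simpa using hy0 i
        · have hIoiT : Finset.Ioi (⊤ : Fin n) = ∅ :=
            Finset.eq_empty_of_forall_notMem fun x hx =>
              absurd (Finset.mem_Ioi.mp hx) (not_lt.mpr le_top)
          rw [hIoiT, Finset.prod_empty, mul_one]
          apply mul_pos _ hzn
          apply Finset.prod_pos
          intro i hi
          exact hy i (Finset.mem_Iio.mp hi)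
      simp only [charP, hprod0, mul_zero, zero_sub]
      linarith
  -- IVT
  have hcont : ContinuousOn (fun x => Q.eval x) (Set.Icc (0 : ℝ) b) :=
    (Polynomial.continuous Q).continuousOn
  have h0 : (fun x => Q.eval x) 0 < 0 := by simpa [heval 0] using hneg
  have hbpos : 0 < (fun x => Q.eval x) b := hb.1
  have hmemI : (0 : ℝ) ∈ Set.Ioo ((fun x => Q.eval x) 0) ((fun x => Q.eval x) b) :=
    ⟨h0, hbpos⟩
  obtain ⟨lam, hlam, hval⟩ := intermediate_value_Ioo hb.2.le hcont hmemI
  exact ⟨lam, hlam.1, by rw [← heval lam]; simpa using hval⟩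
end

section
/- Under the assumptions y_i > 0 for i < n, z_i ≥ 0 for i < n, y_n = 0, z_n > 0, the partial derivative ∂P/∂z_k evaluated at λ = w is strictly negative for every 1 ≤ k ≤ n, where w is the largest real root of P and P(λ,y,z) is the characteristic polynomial of M(y,z). -/
open Finset Polynomial

/-- The polynomial (in `λ`) whose evaluation is `charP`. -/
noncomputable def charQ (n : ℕ) [NeZero n] (y z : Fin n → ℝ) : ℝ[X] :=
  (X + C (y 0 - z 0)) * ∏ i ∈ Finset.Ioi (0 : Fin n), (X + C (y i))
    - ∑ j ∈ Finset.Ioi (0 : Fin n),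
        C ((∏ i ∈ Finset.Iio j, y i) * z j) * ∏ i ∈ Finset.Ioi j, (X + C (y i))

lemma eval_charQ (n : ℕ) [NeZero n] (y z : Fin n → ℝ) (lam : ℝ) :
    (charQ n y z).eval lam = charP n lam y z := by
  simp [charQ, _root_.charP, eval_prod, eval_finset_sum, add_sub_assoc]

lemma monic_first (n : ℕ) [NeZero n] (y z : Fin n → ℝ) :
    ((X + C (y 0 - z 0)) * ∏ i ∈ Finset.Ioi (0 : Fin n), (X + C (y i))).Monic :=
  (monic_X_add_C _).mul (monic_prod_of_monic _ _ fun i _ => monic_X_add_C _)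

lemma degree_first (n : ℕ) [NeZero n] (y z : Fin n → ℝ) :
    ((X + C (y 0 - z 0)) * ∏ i ∈ Finset.Ioi (0 : Fin n), (X + C (y i))).degree = (n : WithBot ℕ) := by
  have h1 := monic_first n y z
  rw [degree_eq_natDegree h1.ne_zero]
  rw [(monic_X_add_C _).natDegree_mul (monic_prod_of_monic _ _ fun i _ => monic_X_add_C _)]
  rw [natDegree_X_add_C, natDegree_prod _ _ (fun i _ => X_add_C_ne_zero (y i))]
  simp only [natDegree_X_add_C, Finset.sum_const, smul_eq_mul, mul_one, Fin.card_Ioi]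
  have hn := Nat.pos_of_ne_zero (NeZero.ne n)
  have h0 : ((0 : Fin n) : ℕ) = 0 := Fin.val_zero n
  norm_cast
  omega

lemma degree_sumpart (n : ℕ) [NeZero n] (y z : Fin n → ℝ) :
    (∑ j ∈ Finset.Ioi (0 : Fin n),
        C ((∏ i ∈ Finset.Iio j, y i) * z j) * ∏ i ∈ Finset.Ioi j, (X + C (y i))).degree
      < (n : WithBot ℕ) := by
  have hn := Nat.pos_of_ne_zero (NeZero.ne n)
  refine (degree_sum_le _ _).trans_lt ?_
  rw [Finset.sup_lt_iff (by exact_mod_cast WithBot.bot_lt_coe n)]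
  intro j hj
  refine (degree_mul_le _ _).trans_lt ?_
  have h2 : (∏ i ∈ Finset.Ioi j, (X + C (y i))).degree ≤ (((Finset.Ioi j).card : ℕ) : WithBot ℕ) := by
    refine (degree_prod_le _ _).trans ?_
    simp [degree_X_add_C]
  have h3 : ((Finset.Ioi j).card : ℕ) ≤ (n - 1 : ℕ) := by
    rw [Fin.card_Ioi]; omega
  calc (C ((∏ i ∈ Finset.Iio j, y i) * z j)).degree + (∏ i ∈ Finset.Ioi j, (X + C (y i))).degree
      ≤ 0 + ((n - 1 : ℕ) : WithBot ℕ) := by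
        exact add_le_add degree_C_le (h2.trans (by exact_mod_cast h3))
    _ = ((n - 1 : ℕ) : WithBot ℕ) := zero_add _
    _ < (n : WithBot ℕ) := by exact_mod_cast Nat.sub_lt hn one_pos

lemma monic_charQ (n : ℕ) [NeZero n] (y z : Fin n → ℝ) : (charQ n y z).Monic :=
  (monic_first n y z).sub_of_left (by rw [degree_first]; exact degree_sumpart n y z)

lemma degree_charQ (n : ℕ) [NeZero n] (y z : Fin n → ℝ) : (charQ n y z).degree = n :=
  (degree_sub_eq_left_of_degree_lt (by rw [degree_first]; exact degree_sumpart n y z)).trans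
    (degree_first n y z)

/-- Under the assumptions `yᵢ > 0` (`i < n`), `zᵢ ≥ 0` (`i < n`), `yₙ = 0`,
`zₙ > 0`, the partial derivative `∂P/∂z_k` at `λ = w` is strictly negative for every
`1 ≤ k ≤ n`, where `w` is the largest real root of `P`. -/
theorem stmt_12 (n : ℕ) [NeZero n] (y z : Fin n → ℝ)
    (hy : ∀ i : Fin n, i < (⊤ : Fin n) → 0 < y i)
    (hz : ∀ i : Fin n, i < (⊤ : Fin n) → 0 ≤ z i)
    (hyn : y (⊤ : Fin n) = 0) (hzn : 0 < z (⊤ : Fin n))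
    (w : ℝ) (hw_root : charP n w y z = 0)
    (hw_max : ∀ lam : ℝ, charP n lam y z = 0 → lam ≤ w) :
    ∀ k : Fin n, deriv (fun s : ℝ => charP n w y (Function.update z k s)) (z k) < 0 := by
  have hn := Nat.pos_of_ne_zero (NeZero.ne n)
  have hy0 : ∀ i : Fin n, 0 ≤ y i := by
    intro i
    rcases eq_or_lt_of_le (le_top (a := i)) with h | h
    · rw [h, hyn]
    · exact (hy i h).le
  -- charP at 0 is negative
  have hneg : charP n 0 y z < 0 := by
    rcases eq_or_lt_of_le (le_top (a := (0 : Fin n))) with h0 | h0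
    · have hIoi : Finset.Ioi (0 : Fin n) = ∅ := by
        ext i
        simp only [Finset.mem_Ioi, Finset.notMem_empty, iff_false]
        exact (le_top.trans (le_of_eq h0.symm)).not_gt
      have hy0' : y 0 = 0 := by rw [h0, hyn]
      have hz0' : 0 < z 0 := by rw [h0]; exact hzn
      simp only [_root_.charP, hIoi, Finset.prod_empty, Finset.sum_empty, mul_one, sub_zero]
      linarith
    · have htop : (⊤ : Fin n) ∈ Finset.Ioi (0 : Fin n) := Finset.mem_Ioi.2 h0
      have hprod0 : ∏ i ∈ Finset.Ioi (0 : Fin n), ((0 : ℝ) + y i) = 0 :=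
        Finset.prod_eq_zero htop (by simp [hyn])
      have hsum : ∑ j ∈ Finset.Ioi (0 : Fin n),
          (∏ i ∈ Finset.Iio j, y i) * z j * ∏ i ∈ Finset.Ioi j, ((0:ℝ) + y i)
          = (∏ i ∈ Finset.Iio (⊤ : Fin n), y i) * z ⊤ := by
        rw [Finset.sum_eq_single_of_mem ⊤ htop]
        · have : Finset.Ioi (⊤ : Fin n) = ∅ := by
            ext i; simp [Finset.mem_Ioi, (le_top (a := i)).not_gt]
          rw [this, Finset.prod_empty, mul_one]
        · intro j hj hne
          have hjt : (⊤ : Fin n) ∈ Finset.Ioi j :=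
            Finset.mem_Ioi.2 (lt_of_le_of_ne le_top hne)
          rw [Finset.prod_eq_zero hjt (by simp [hyn]), mul_zero]
      have hpos : 0 < (∏ i ∈ Finset.Iio (⊤ : Fin n), y i) * z ⊤ :=
        mul_pos (Finset.prod_pos fun i hi => hy i (Finset.mem_Iio.1 hi)) hzn
      simp only [_root_.charP, hprod0, hsum, mul_zero, zero_sub]
      linarith
  -- w is positive
  have hwpos : 0 < w := by
    have ht : Filter.Tendsto (fun lam => (charQ n y z).eval lam) Filter.atTop Filter.atTop := by
      refine Polynomial.tendsto_atTop_of_leadingCoeff_nonneg _ ?_ ?_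
      · rw [degree_charQ]; exact_mod_cast hn
      · rw [(monic_charQ n y z).leadingCoeff]; exact zero_le_one
    obtain ⟨M, hM⟩ := Filter.eventually_atTop.1 (ht.eventually_ge_atTop 1)
    set M' := max M 1 with hM'
    have h1 : 0 < charP n M' y z := by
      have := hM M' (le_max_left _ _)
      rw [eval_charQ] at this; linarith
    have hcont : ContinuousOn (fun lam => charP n lam y z) (Set.Icc 0 M') := by
      have he : (fun lam => charP n lam y z) = fun lam => (charQ n y z).eval lam :=
        funext fun l => (eval_charQ n y z l).symm
      rw [he]; exact (Polynomial.continuous _).continuousOn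
    have h0M : (0:ℝ) ≤ M' := le_trans zero_le_one (le_max_right _ _)
    obtain ⟨c, hc, hceq⟩ := intermediate_value_Icc h0M hcont ⟨hneg.le, h1.le⟩
    have hceq' : charP n c y z = 0 := hceq
    have hcpos : 0 < c := by
      rcases eq_or_lt_of_le hc.1 with h | h
      · exfalso; rw [← h] at hceq'; rw [hceq'] at hneg; exact lt_irrefl _ hneg
      · exact h
    exact lt_of_lt_of_le hcpos (hw_max c hceq')
  intro k
  set m : ℝ := (∏ i ∈ Finset.Iio k, y i) * ∏ i ∈ Finset.Ioi k, (w + y i) with hm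
  have hmpos : 0 < m :=
    mul_pos (Finset.prod_pos fun i hi =>
        hy i (lt_of_lt_of_le (Finset.mem_Iio.1 hi) le_top))
      (Finset.prod_pos fun i hi => add_pos_of_pos_of_nonneg hwpos (hy0 i))
  have hkey : ∀ s : ℝ, charP n w y (Function.update z k s)
      = charP n w y z - m * (s - z k) := by
    intro s
    rcases eq_or_ne k 0 with rfl | hk
    · simp only [_root_.charP]
      have h1 : ∀ j ∈ Finset.Ioi (0 : Fin n),
          (∏ i ∈ Finset.Iio j, y i) * (Function.update z 0 s j)
            * ∏ i ∈ Finset.Ioi j, (w + y i)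
          = (∏ i ∈ Finset.Iio j, y i) * z j * ∏ i ∈ Finset.Ioi j, (w + y i) := by
        intro j hj
        rw [Function.update_of_ne (ne_of_gt (Finset.mem_Ioi.1 hj))]
      rw [Finset.sum_congr rfl h1, Function.update_self]
      have hIio : ∏ i ∈ Finset.Iio (0 : Fin n), y i = 1 :=
        Finset.prod_eq_one fun i hi => absurd (Finset.mem_Iio.1 hi) (by simp [Fin.lt_def])
      rw [hm, hIio, one_mul]
      ring
    · have hk0 : k ∈ Finset.Ioi (0 : Fin n) :=
        Finset.mem_Ioi.2 ((Fin.pos_iff_ne_zero' k).2 hk)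
      simp only [_root_.charP]
      rw [Function.update_of_ne (Ne.symm hk)]
      have hdiff : ∑ j ∈ Finset.Ioi (0 : Fin n),
          ((∏ i ∈ Finset.Iio j, y i) * (Function.update z k s j)
              * ∏ i ∈ Finset.Ioi j, (w + y i)
            - (∏ i ∈ Finset.Iio j, y i) * z j * ∏ i ∈ Finset.Ioi j, (w + y i))
          = m * (s - z k) := by
        rw [Finset.sum_eq_single_of_mem k hk0]
        · rw [Function.update_self, hm]; ring
        · intro j hj hne
          rw [Function.update_of_ne hne]; ring
      rw [Finset.sum_sub_distrib] at hdiff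
      linarith
  have heq : (fun s : ℝ => charP n w y (Function.update z k s))
      = fun s : ℝ => charP n w y z - m * (s - z k) := funext hkey
  rw [heq]
  have hder : HasDerivAt (fun s : ℝ => charP n w y z - m * (s - z k)) (-m) (z k) := by
    have h := (((hasDerivAt_id (z k)).sub_const (z k)).const_mul m).const_sub (charP n w y z)
    simpa using h
  rw [hder.deriv]
  linarith
end

section
/- Under the assumptions y_i > 0 for i < n, z_i ≥ 0 for i < n, y_n = 0, z_n > 0, and additionally z_k = 0 for some 1 < k < n: if w > 0 satisfies P(w,y,z) = 0, then (∂P/∂y_k)|_{λ=w} < 0. -/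
open Finset

/-- Under the assumptions `yᵢ > 0` (`i < n`), `zᵢ ≥ 0` (`i < n`), `yₙ = 0`,
`zₙ > 0`, and additionally `z_k = 0` for some `1 < k < n`: if `w > 0` satisfies
`P(w, y, z) = 0`, then `(∂P/∂y_k)|_{λ=w} < 0`. -/
theorem stmt_13 (n : ℕ) [NeZero n] (y z : Fin n → ℝ)
    (hy : ∀ i : Fin n, i < (⊤ : Fin n) → 0 < y i)
    (hz : ∀ i : Fin n, i < (⊤ : Fin n) → 0 ≤ z i)
    (hyn : y (⊤ : Fin n) = 0) (hzn : 0 < z (⊤ : Fin n))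
    (k : Fin n) (hk0 : 0 < k) (hkn : k < (⊤ : Fin n)) (hzk : z k = 0)
    (w : ℝ) (hw : 0 < w) (hw_root : charP n w y z = 0) :
    deriv (fun s : ℝ => charP n w (Function.update y k s) z) (y k) < 0 := by
  have hk1 : k ∈ Finset.Ioi (0 : Fin n) := Finset.mem_Ioi.mpr hk0
  have hyk : 0 < y k := hy k hkn
  have hwk : 0 < w + y k := by linarith
  have hynn : ∀ i : Fin n, 0 ≤ y i := by
    intro i
    rcases lt_or_eq_of_le (le_top : i ≤ ⊤) with h | h
    · exact (hy i h).le
    · rw [h, hyn]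
  have hznn : ∀ i : Fin n, 0 ≤ z i := by
    intro i
    rcases lt_or_eq_of_le (le_top : i ≤ ⊤) with h | h
    · exact hz i h
    · rw [h]; exact hzn.le
  have hwpos : ∀ i : Fin n, 0 < w + y i := fun i => by
    have := hynn i; linarith
  set S := (Finset.Ioi (0 : Fin n)).erase k with hS
  set D : ℝ := (w + y 0 - z 0) * ∏ i ∈ S, (w + y i)
      - ∑ j ∈ S.filter (fun j => j < k),
          (∏ i ∈ Finset.Iio j, y i) * z j * ∏ i ∈ (Finset.Ioi j).erase k, (w + y i)
      with hD
  set E : ℝ := ∑ j ∈ S.filter (fun j => ¬ j < k),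
          (∏ i ∈ (Finset.Iio j).erase k, y i) * z j * ∏ i ∈ Finset.Ioi j, (w + y i)
      with hE
  have key : ∀ s : ℝ, charP n w (Function.update y k s) z = D * (w + s) - E * s := by
    intro s
    unfold charP
    have h0 : Function.update y k s 0 = y 0 := Function.update_of_ne hk0.ne s y
    have hprod1 : ∏ i ∈ Finset.Ioi (0 : Fin n), (w + Function.update y k s i)
        = (w + s) * ∏ i ∈ S, (w + y i) := by
      rw [← Finset.mul_prod_erase _ _ hk1, Function.update_self]
      congr 1
      refine Finset.prod_congr rfl fun i hi => ?_
      rw [Function.update_of_ne (Finset.ne_of_mem_erase hi)]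
    have hsum : ∑ j ∈ Finset.Ioi (0 : Fin n),
        (∏ i ∈ Finset.Iio j, Function.update y k s i) * z j
          * ∏ i ∈ Finset.Ioi j, (w + Function.update y k s i)
        = (∑ j ∈ S.filter (fun j => j < k),
            (∏ i ∈ Finset.Iio j, y i) * z j * ∏ i ∈ (Finset.Ioi j).erase k, (w + y i))
            * (w + s)
          + (∑ j ∈ S.filter (fun j => ¬ j < k),
            (∏ i ∈ (Finset.Iio j).erase k, y i) * z j * ∏ i ∈ Finset.Ioi j, (w + y i)) * s := by
      rw [← Finset.add_sum_erase _ _ hk1, ← hS]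
      have hTk : (∏ i ∈ Finset.Iio k, Function.update y k s i) * z k
          * ∏ i ∈ Finset.Ioi k, (w + Function.update y k s i) = 0 := by
        rw [hzk]; ring
      rw [hTk, zero_add, ← Finset.sum_filter_add_sum_filter_not S (fun j => j < k),
        Finset.sum_mul, Finset.sum_mul]
      congr 1
      · refine Finset.sum_congr rfl fun j hj => ?_
        obtain ⟨hjS, hjk⟩ := Finset.mem_filter.mp hj
        have hkIoi : k ∈ Finset.Ioi j := Finset.mem_Ioi.mpr hjk
        have h1 : ∏ i ∈ Finset.Iio j, Function.update y k s i
            = ∏ i ∈ Finset.Iio j, y i := by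
          refine Finset.prod_congr rfl fun i hi => ?_
          exact Function.update_of_ne (ne_of_lt ((Finset.mem_Iio.mp hi).trans hjk)) s y
        have h2 : ∏ i ∈ Finset.Ioi j, (w + Function.update y k s i)
            = (w + s) * ∏ i ∈ (Finset.Ioi j).erase k, (w + y i) := by
          rw [← Finset.mul_prod_erase _ _ hkIoi, Function.update_self]
          congr 1
          refine Finset.prod_congr rfl fun i hi => ?_
          rw [Function.update_of_ne (Finset.ne_of_mem_erase hi)]
        rw [h1, h2]; ring
      · refine Finset.sum_congr rfl fun j hj => ?_
        obtain ⟨hjS, hjk⟩ := Finset.mem_filter.mp hj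
        have hkj : k < j := lt_of_le_of_ne (not_lt.mp hjk) (Finset.ne_of_mem_erase hjS).symm
        have hkIio : k ∈ Finset.Iio j := Finset.mem_Iio.mpr hkj
        have h1 : ∏ i ∈ Finset.Iio j, Function.update y k s i
            = s * ∏ i ∈ (Finset.Iio j).erase k, y i := by
          rw [← Finset.mul_prod_erase _ _ hkIio, Function.update_self]
          congr 1
          refine Finset.prod_congr rfl fun i hi => ?_
          exact Function.update_of_ne (Finset.ne_of_mem_erase hi) s y
        have h2 : ∏ i ∈ Finset.Ioi j, (w + Function.update y k s i)
            = ∏ i ∈ Finset.Ioi j, (w + y i) := by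
          refine Finset.prod_congr rfl fun i hi => ?_
          rw [Function.update_of_ne (ne_of_gt (hkj.trans (Finset.mem_Ioi.mp hi)))]
        rw [h1, h2]; ring
    rw [h0, hprod1, hsum, hD, hE]
    ring
  have hderiv : deriv (fun s : ℝ => charP n w (Function.update y k s) z) (y k) = D - E := by
    have hfe : (fun s : ℝ => charP n w (Function.update y k s) z)
        = fun s : ℝ => D * (w + s) - E * s := funext key
    rw [hfe]
    have h : HasDerivAt (fun s : ℝ => D * (w + s) - E * s) (D * 1 - E * 1) (y k) :=
      (((hasDerivAt_id (y k)).const_add w).const_mul D).sub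
        ((hasDerivAt_id (y k)).const_mul E)
    simpa using h.deriv
  have hEpos : 0 < E := by
    rw [hE]
    apply Finset.sum_pos'
    · intro j hj
      refine mul_nonneg (mul_nonneg ?_ (hznn j)) ?_
      · exact Finset.prod_nonneg fun i _ => hynn i
      · exact Finset.prod_nonneg fun i _ => (hwpos i).le
    · refine ⟨⊤, ?_, ?_⟩
      · refine Finset.mem_filter.mpr ⟨Finset.mem_erase.mpr ⟨hkn.ne', Finset.mem_Ioi.mpr
          (hk0.trans hkn)⟩, not_lt.mpr le_top⟩
      · refine mul_pos (mul_pos ?_ hzn) ?_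
        · refine Finset.prod_pos fun i hi => ?_
          exact hy i (Finset.mem_Iio.mp (Finset.mem_of_mem_erase hi))
        · exact Finset.prod_pos fun i _ => hwpos i
  have h0 : D * (w + y k) - E * y k = 0 := by
    have hk := key (y k)
    rw [Function.update_eq_self] at hk
    rw [← hk]; exact hw_root
  have hDE : D < E := by
    have h1 : E * y k < E * (w + y k) := by
      apply mul_lt_mul_of_pos_left _ hEpos
      linarith
    have h2 : D * (w + y k) < E * (w + y k) := by linarith
    exact lt_of_mul_lt_mul_right h2 hwk.le
  rw [hderiv]
  linarith
end

section
/- Under the assumptions y_i > 0 for i < n, z_i ≥ 0 for i < n, y_n = 0, z_n > 0, and y_k = z_k > 0 for some k > 1: if w > 0 satisfies P(w,y,z) = 0, then (∂P/∂y_k + ∂P/∂z_k)|_{λ=w} < 0. -/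
set_option maxHeartbeats 1000000


open Finset

lemma prod_update_of_not_mem' {n : ℕ} (y : Fin n → ℝ) (k : Fin n) (s : ℝ)
    (F : ℝ → ℝ) (T : Finset (Fin n)) (h : k ∉ T) :
    ∏ i ∈ T, F (Function.update y k s i) = ∏ i ∈ T, F (y i) :=
  Finset.prod_congr rfl fun i hi => by
    rw [Function.update_of_ne (by rintro rfl; exact h hi)]

lemma prod_update_of_mem' {n : ℕ} (y : Fin n → ℝ) (k : Fin n) (s : ℝ)
    (F : ℝ → ℝ) (T : Finset (Fin n)) (h : k ∈ T) :
    ∏ i ∈ T, F (Function.update y k s i) = F s * ∏ i ∈ T.erase k, F (y i) := by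
  rw [← Finset.mul_prod_erase _ _ h, Function.update_self]
  congr 1
  exact Finset.prod_congr rfl fun i hi => by
    rw [Function.update_of_ne (Finset.ne_of_mem_erase hi)]

/-- Under the assumptions `yᵢ > 0` (`i < n`), `zᵢ ≥ 0` (`i < n`), `yₙ = 0`,
`zₙ > 0`, and `y_k = z_k > 0` for some `k > 1`: if `w > 0` satisfies `P(w, y, z) = 0`, then
`(∂P/∂y_k + ∂P/∂z_k)|_{λ=w} < 0`. -/
theorem stmt_14 (n : ℕ) [NeZero n] (y z : Fin n → ℝ)
    (hy : ∀ i : Fin n, i < (⊤ : Fin n) → 0 < y i)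
    (hz : ∀ i : Fin n, i < (⊤ : Fin n) → 0 ≤ z i)
    (hyn : y (⊤ : Fin n) = 0) (hzn : 0 < z (⊤ : Fin n))
    (k : Fin n) (hk0 : 0 < k) (hyzk : y k = z k) (hk_pos : 0 < y k)
    (w : ℝ) (hw : 0 < w) (hw_root : charP n w y z = 0) :
    deriv (fun s : ℝ => charP n w (Function.update y k s) z) (y k)
      + deriv (fun s : ℝ => charP n w y (Function.update z k s)) (z k) < 0 := by
  -- Basic positivity facts
  have hkt : k < (⊤ : Fin n) := by
    rcases lt_or_eq_of_le (le_top (a := k)) with h | h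
    · exact h
    · exfalso; rw [h, hyn] at hk_pos; exact lt_irrefl 0 hk_pos
  have hyge : ∀ i : Fin n, 0 ≤ y i := by
    intro i
    rcases lt_or_eq_of_le (le_top (a := i)) with h | h
    · exact (hy i h).le
    · rw [h, hyn]
  have hwy : ∀ i : Fin n, 0 < w + y i := fun i => add_pos_of_pos_of_nonneg hw (hyge i)
  -- splitting of the sum over `Ioi 0`
  have hsplit : ∀ G : Fin n → ℝ,
      ∑ j ∈ Finset.Ioi (0 : Fin n), G j
        = ∑ j ∈ Finset.Ioo (0 : Fin n) k, G j + G k + ∑ j ∈ Finset.Ioi k, G j := by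
    intro G
    have h1 : Finset.Ioc (0 : Fin n) k ∪ Finset.Ioi k = Finset.Ioi (0 : Fin n) := by
      ext a
      simp only [Finset.mem_union, Finset.mem_Ioc, Finset.mem_Ioi]
      constructor
      · rintro (⟨h, _⟩ | h)
        · exact h
        · exact hk0.trans h
      · intro h
        rcases le_or_gt a k with hh | hh
        · exact Or.inl ⟨h, hh⟩
        · exact Or.inr hh
    have hd : Disjoint (Finset.Ioc (0 : Fin n) k) (Finset.Ioi k) := by
      rw [Finset.disjoint_left]
      intro a ha hb
      exact absurd (Finset.mem_Ioi.mp hb) (not_lt.mpr (Finset.mem_Ioc.mp ha).2)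
    rw [← h1, Finset.sum_union hd, ← Finset.Ioo_insert_right hk0,
      Finset.sum_insert (by simp)]
    ring
  -- abbreviations
  set C : ℝ := ∏ i ∈ (Finset.Ioi (0 : Fin n)).erase k, (w + y i) with hC
  set a1 : ℝ := (w + y 0 - z 0) * C with ha1
  set aS : ℝ := ∑ j ∈ Finset.Ioo (0 : Fin n) k,
    (∏ i ∈ Finset.Iio j, y i) * z j * ∏ i ∈ (Finset.Ioi j).erase k, (w + y i) with haS
  set aT : ℝ := ∑ j ∈ Finset.Ioi k,
    (∏ i ∈ (Finset.Iio j).erase k, y i) * z j * ∏ i ∈ Finset.Ioi j, (w + y i) with haT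
  set Qk : ℝ := (∏ i ∈ Finset.Iio k, y i) * z k * ∏ i ∈ Finset.Ioi k, (w + y i) with hQkdef
  set m : ℝ := (∏ i ∈ Finset.Iio k, y i) * ∏ i ∈ Finset.Ioi k, (w + y i) with hm
  set SOo : ℝ := ∑ j ∈ Finset.Ioo (0 : Fin n) k,
    (∏ i ∈ Finset.Iio j, y i) * z j * ∏ i ∈ Finset.Ioi j, (w + y i) with hSOo
  set SIoi : ℝ := ∑ j ∈ Finset.Ioi k,
    (∏ i ∈ Finset.Iio j, y i) * z j * ∏ i ∈ Finset.Ioi j, (w + y i) with hSIoi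
  set P1 : ℝ := (w + y 0 - z 0) * ∏ i ∈ Finset.Ioi (0 : Fin n), (w + y i) with hP1
  have hk0' : (0 : Fin n) ≠ k := hk0.ne
  -- first function is affine in s
  have hfe1 : (fun s : ℝ => charP n w (Function.update y k s) z)
      = fun s : ℝ => (a1 - aS) * (w + s) - Qk - aT * s := by
    funext s
    unfold charP
    rw [hsplit]
    rw [Function.update_of_ne hk0']
    rw [prod_update_of_mem' y k s (fun t => w + t) _ (Finset.mem_Ioi.mpr hk0)]
    rw [prod_update_of_not_mem' y k s (fun t => t) (Finset.Iio k) (by simp)]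
    rw [prod_update_of_not_mem' y k s (fun t => w + t) (Finset.Ioi k) (by simp)]
    have e2 : ∑ j ∈ Finset.Ioo (0 : Fin n) k,
        (∏ i ∈ Finset.Iio j, Function.update y k s i) * z j
          * ∏ i ∈ Finset.Ioi j, (w + Function.update y k s i)
        = aS * (w + s) := by
      rw [haS, Finset.sum_mul]
      refine Finset.sum_congr rfl fun j hj => ?_
      have hjk : j < k := (Finset.mem_Ioo.mp hj).2
      rw [prod_update_of_not_mem' y k s (fun t => t) (Finset.Iio j)
        (by simp [not_lt, hjk.le]),
        prod_update_of_mem' y k s (fun t => w + t) (Finset.Ioi j) (Finset.mem_Ioi.mpr hjk)]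
      ring
    have e3 : ∑ j ∈ Finset.Ioi k,
        (∏ i ∈ Finset.Iio j, Function.update y k s i) * z j
          * ∏ i ∈ Finset.Ioi j, (w + Function.update y k s i)
        = aT * s := by
      rw [haT, Finset.sum_mul]
      refine Finset.sum_congr rfl fun j hj => ?_
      have hjk : k < j := Finset.mem_Ioi.mp hj
      rw [prod_update_of_mem' y k s (fun t => t) (Finset.Iio j) (Finset.mem_Iio.mpr hjk),
        prod_update_of_not_mem' y k s (fun t => w + t) (Finset.Ioi j)
          (by simp [not_lt, hjk.le])]
      ring
    rw [e2, e3, ha1, hQkdef]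
    ring
  -- second function is affine in s
  have hfe2 : (fun s : ℝ => charP n w y (Function.update z k s))
      = fun s : ℝ => (P1 - SOo - SIoi) - m * s := by
    funext s
    unfold charP
    rw [hsplit]
    rw [Function.update_of_ne hk0', Function.update_self]
    have e2 : ∑ j ∈ Finset.Ioo (0 : Fin n) k,
        (∏ i ∈ Finset.Iio j, y i) * Function.update z k s j
          * ∏ i ∈ Finset.Ioi j, (w + y i) = SOo := by
      refine Finset.sum_congr rfl fun j hj => ?_
      rw [Function.update_of_ne (Finset.mem_Ioo.mp hj).2.ne]
    have e3 : ∑ j ∈ Finset.Ioi k,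
        (∏ i ∈ Finset.Iio j, y i) * Function.update z k s j
          * ∏ i ∈ Finset.Ioi j, (w + y i) = SIoi := by
      refine Finset.sum_congr rfl fun j hj => ?_
      rw [Function.update_of_ne (Finset.mem_Ioi.mp hj).ne']
    rw [e2, e3, hP1, hm]
    ring
  -- compute the derivatives
  have hd1 : deriv (fun s : ℝ => charP n w (Function.update y k s) z) (y k)
      = (a1 - aS) - aT := by
    rw [hfe1]
    have h : HasDerivAt (fun s : ℝ => (a1 - aS) * (w + s) - Qk - aT * s)
        ((a1 - aS) - aT) (y k) := by
      have h1 : HasDerivAt (fun s : ℝ => w + s) 1 (y k) := by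
        simpa using (hasDerivAt_id (y k)).const_add w
      have := ((h1.const_mul (a1 - aS)).sub_const Qk).sub
        ((hasDerivAt_id (y k)).const_mul aT)
      simpa [Pi.sub_def] using this
    exact h.deriv
  have hd2 : deriv (fun s : ℝ => charP n w y (Function.update z k s)) (z k) = -m := by
    rw [hfe2]
    have h : HasDerivAt (fun s : ℝ => (P1 - SOo - SIoi) - m * s) (-m) (z k) := by
      have := (hasDerivAt_const (z k) (P1 - SOo - SIoi)).sub
        ((hasDerivAt_id (z k)).const_mul m)
      simpa [Pi.sub_def] using this
    exact h.deriv
  rw [hd1, hd2]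
  -- key multiplicative identities
  have key1 : (w + y k) * C = ∏ i ∈ Finset.Ioi (0 : Fin n), (w + y i) := by
    rw [hC]
    exact Finset.mul_prod_erase _ (fun i => w + y i) (Finset.mem_Ioi.mpr hk0)
  have key2 : (w + y k) * aS = SOo := by
    rw [haS, hSOo, Finset.mul_sum]
    refine Finset.sum_congr rfl fun j hj => ?_
    have hjk : j < k := (Finset.mem_Ioo.mp hj).2
    rw [← Finset.mul_prod_erase (Finset.Ioi j) (fun i => w + y i) (Finset.mem_Ioi.mpr hjk)]
    ring
  have key3 : y k * aT = SIoi := by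
    rw [haT, hSIoi, Finset.mul_sum]
    refine Finset.sum_congr rfl fun j hj => ?_
    have hjk : k < j := Finset.mem_Ioi.mp hj
    rw [← Finset.mul_prod_erase (Finset.Iio j) (fun i => y i) (Finset.mem_Iio.mpr hjk)]
    ring
  have key4 : y k * m = Qk := by
    rw [hm, hQkdef, ← hyzk]; ring
  -- root equation
  have hroot : P1 = SOo + Qk + SIoi := by
    have := hw_root
    unfold charP at this
    rw [hsplit] at this
    rw [hP1, hSOo, hSIoi, hQkdef]
    linarith
  -- positivity of Qk and nonnegativity of SIoi
  have hQkpos : 0 < Qk := by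
    rw [hQkdef]
    have h1 : 0 < ∏ i ∈ Finset.Iio k, y i :=
      Finset.prod_pos fun i hi => hy i ((Finset.mem_Iio.mp hi).trans hkt)
    have h2 : 0 < z k := hyzk ▸ hk_pos
    have h3 : 0 < ∏ i ∈ Finset.Ioi k, (w + y i) := Finset.prod_pos fun i _ => hwy i
    positivity
  have hSIoinn : 0 ≤ SIoi := by
    rw [hSIoi]
    refine Finset.sum_nonneg fun j hj => ?_
    have h1 : 0 ≤ ∏ i ∈ Finset.Iio j, y i := Finset.prod_nonneg fun i _ => hyge i
    have h2 : 0 ≤ z j := by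
      rcases lt_or_eq_of_le (le_top (a := j)) with h | h
      · exact hz j h
      · rw [h]; exact hzn.le
    have h3 : 0 ≤ ∏ i ∈ Finset.Ioi j, (w + y i) :=
      Finset.prod_nonneg fun i _ => (hwy i).le
    positivity
  -- the main computation
  have hmain : (w + y k) * (y k) * ((a1 - aS - aT) + -m) = -w * (Qk + SIoi) := by
    have e1 : (w + y k) * a1 = P1 := by
      rw [ha1, hP1, mul_comm (w + y 0 - z 0) C, ← mul_assoc, mul_comm (w + y k) C,
        mul_assoc, mul_comm C, ← key1]
      ring
    have : (w + y k) * (y k) * ((a1 - aS - aT) + -m)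
        = y k * ((w + y k) * a1 - (w + y k) * aS) - (w + y k) * (y k * aT)
          - (w + y k) * (y k * m) := by ring
    rw [this, e1, key2, key3, key4, hroot]
    ring
  have hpos : 0 < (w + y k) * y k := mul_pos (hwy k) hk_pos
  have hneg : (w + y k) * (y k) * ((a1 - aS - aT) + -m) < 0 := by
    rw [hmain]
    exact mul_neg_of_neg_of_pos (neg_lt_zero.mpr hw) (by linarith)
  rcases lt_trichotomy ((a1 - aS - aT) + -m) 0 with h | h | h
  · linarith
  · exfalso; rw [h, mul_zero] at hneg; exact lt_irrefl 0 hneg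
  · exact absurd (mul_pos hpos h) (not_lt.mpr hneg.le)
end
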